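/- Let f : [0,1] → ℝ be the restriction of an exponential like function of range m, i.e. f(x) = ∑_{i=1}^m a_i e^{β_i x} with distinct nonzero real numbers β_1, …, β_m and nonzero real numbers a_1, …, a_m. Then for every c ∈ ℝ, the set {x ∈ [0,1] : f(x) = c} has at most m elements. -/

import Mathlib

open Set

private lemma rolle_count (g : ℝ → ℝ) (hg : Differentiable ℝ g) (s : Finset ℝ)
    (hs : ∀ x ∈ s, g x = 0) :
    ∃ t : Finset ℝ, t.card = s.card - 1 ∧ ∀ x ∈ t, deriv g x = 0 := by
  rcases Nat.eq_zero_or_pos s.card with h0 | hpos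
  · exact ⟨∅, by simp [h0], by simp⟩
  set e := s.orderIsoOfFin rfl with he
  have key : ∀ i : Fin (s.card - 1), ∃ y : ℝ,
      ((e ⟨i.1, by omega⟩ : s) : ℝ) < y ∧ y < ((e ⟨i.1 + 1, by omega⟩ : s) : ℝ) ∧
      deriv g y = 0 := by
    intro i
    have hab : ((e ⟨i.1, by omega⟩ : s) : ℝ) < ((e ⟨i.1 + 1, by omega⟩ : s) : ℝ) := by
      have hlt : (⟨i.1, by omega⟩ : Fin s.card) < ⟨i.1 + 1, by omega⟩ := by
        simp [Fin.lt_def]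
      exact_mod_cast e.strictMono hlt
    obtain ⟨y, hy, hy0⟩ := exists_deriv_eq_zero hab hg.continuous.continuousOn
      (by rw [hs _ (e _).2, hs _ (e _).2])
    exact ⟨y, hy.1, hy.2, hy0⟩
  choose y hy1 hy2 hy0 using key
  have hmono : StrictMono y := by
    intro i j hij
    calc y i < ((e ⟨i.1 + 1, by omega⟩ : s) : ℝ) := hy2 i
      _ ≤ ((e ⟨j.1, by omega⟩ : s) : ℝ) := by
          have hle : (⟨i.1 + 1, by omega⟩ : Fin s.card) ≤ ⟨j.1, by omega⟩ := by
            simp only [Fin.le_def]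
            omega
          have := e.monotone hle
          exact_mod_cast this
      _ < y j := hy1 j
  refine ⟨Finset.image y Finset.univ, ?_, ?_⟩
  · rw [Finset.card_image_of_injective _ hmono.injective, Finset.card_univ, Fintype.card_fin]
  · intro x hx
    obtain ⟨i, _, rfl⟩ := Finset.mem_image.1 hx
    exact hy0 i

private lemma expsum_hasDerivAt (n : ℕ) (c γ : Fin n → ℝ) (x : ℝ) :
    HasDerivAt (fun x => ∑ i, c i * Real.exp (γ i * x))
      (∑ i, c i * γ i * Real.exp (γ i * x)) x := by
  have : ∀ i ∈ Finset.univ, HasDerivAt (fun x => c i * Real.exp (γ i * x))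
      (c i * γ i * Real.exp (γ i * x)) x := by
    intro i _
    have h1 : HasDerivAt (fun x : ℝ => γ i * x) (γ i) x := by
      simpa using (hasDerivAt_id x).const_mul (γ i)
    have h2 := h1.exp
    have := h2.const_mul (c i)
    convert this using 1
    · rfl
    · rfl
    · ring
  simpa using HasDerivAt.fun_sum this

private lemma exp_sum_zeros : ∀ (m : ℕ) (a β : Fin m → ℝ), (∀ i, a i ≠ 0) →
    Function.Injective β → ∀ s : Finset ℝ,
    (∀ x ∈ s, ∑ i, a i * Real.exp (β i * x) = 0) → s.card < m ∨ m = 0 := by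
  intro m
  induction m with
  | zero => intro _ _ _ _ _ _; exact Or.inr rfl
  | succ m ih =>
    intro a β ha hβ s hs
    left
    by_contra hcard
    push_neg at hcard
    rcases Nat.eq_zero_or_pos m with rfl | hm
    · -- m = 0 : single term, never zero
      obtain ⟨x, hx⟩ := Finset.card_pos.1 (by omega : 0 < s.card)
      have := hs x hx
      rw [Fin.sum_univ_one] at this
      exact absurd this (mul_ne_zero (ha 0) (Real.exp_ne_zero _))
    -- general case
    set j := Fin.last m with hj
    set h : ℝ → ℝ := fun x => ∑ i, a i * Real.exp ((β i - β j) * x) with hhdef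
    have hzero : ∀ x ∈ s, h x = 0 := by
      intro x hx
      have : h x = (∑ i, a i * Real.exp (β i * x)) * Real.exp (-(β j * x)) := by
        rw [Finset.sum_mul]
        refine Finset.sum_congr rfl fun i _ => ?_
        rw [mul_assoc, ← Real.exp_add]
        ring_nf
      rw [this, hs x hx, zero_mul]
    have hdiff : Differentiable ℝ h := fun x => (expsum_hasDerivAt _ _ _ x).differentiableAt
    obtain ⟨t, htc, ht0⟩ := rolle_count h hdiff s hzero
    have hderiv : ∀ x, deriv h x =
        ∑ i : Fin m, (a i.castSucc * (β i.castSucc - β j)) * Real.exp ((β i.castSucc - β j) * x) := by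
      intro x
      rw [(expsum_hasDerivAt _ _ _ x).deriv, Fin.sum_univ_castSucc]
      simp [hj]
    have ht0' : ∀ x ∈ t, ∑ i : Fin m,
        (a i.castSucc * (β i.castSucc - β j)) * Real.exp ((β i.castSucc - β j) * x) = 0 := by
      intro x hx
      rw [← hderiv x]; exact ht0 x hx
    have := ih (fun i => a i.castSucc * (β i.castSucc - β j)) (fun i => β i.castSucc - β j)
      (fun i => mul_ne_zero (ha _) (sub_ne_zero.2 fun hEq =>
        absurd (hβ hEq) (Fin.castSucc_lt_last i).ne))
      (fun i k hik => by
        have h1 : β i.castSucc = β k.castSucc := by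
          have := hik; dsimp at this; linarith
        exact Fin.castSucc_injective _ (hβ h1)) t ht0'
    omega

private lemma finite_ncard_of_finset_bound {S : Set ℝ} {n : ℕ}
    (h : ∀ s : Finset ℝ, ↑s ⊆ S → s.card ≤ n) : S.Finite ∧ S.ncard ≤ n := by
  have hfin : S.Finite := by
    by_contra hinf
    obtain ⟨t, hts, htc⟩ := Set.Infinite.exists_subset_card_eq hinf (n + 1)
    have := h t hts
    omega
  refine ⟨hfin, ?_⟩
  rw [Set.ncard_eq_toFinset_card S hfin]
  exact h _ (by simp)

/-- Lemma 5 of the paper. An exponential like function of range `m`,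
restricted to `[0,1]`, attains each value `c ∈ ℝ` at most `m` times. -/
theorem explike_preimage_card_le
    (m : ℕ) (hm : 1 ≤ m) (a β : Fin m → ℝ)
    (ha : ∀ i, a i ≠ 0) (hβ : ∀ i, β i ≠ 0) (hβinj : Function.Injective β)
    (f : ℝ → ℝ) (hf : ∀ x, f x = ∑ i, a i * Real.exp (β i * x)) (c : ℝ) :
    {x ∈ Icc (0:ℝ) 1 | f x = c}.Finite ∧ {x ∈ Icc (0:ℝ) 1 | f x = c}.ncard ≤ m := by
  apply finite_ncard_of_finset_bound
  intro s hsS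
  by_cases hc : c = 0
  · subst hc
    have := exp_sum_zeros m a β ha hβinj s (fun x hx => by
      rw [← hf x]; exact (hsS hx).2)
    omega
  · set a' : Fin (m + 1) → ℝ := Fin.snoc a (-c) with ha'
    set β' : Fin (m + 1) → ℝ := Fin.snoc β 0 with hβ'
    have ha'0 : ∀ i, a' i ≠ 0 := by
      intro i
      refine Fin.lastCases ?_ ?_ i
      · simp [ha', neg_ne_zero.2 hc]
      · intro k; simp [ha', ha k]
    have hval : ∀ i : Fin m, β' i.castSucc = β i := fun i => by simp [hβ']
    have hlast : β' (Fin.last m) = 0 := by simp [hβ']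
    have hβ'inj : Function.Injective β' := by
      intro i k hik
      induction i using Fin.lastCases with
      | last =>
        induction k using Fin.lastCases with
        | last => rfl
        | cast l => rw [hlast, hval] at hik; exact absurd hik.symm (hβ l)
      | cast l =>
        induction k using Fin.lastCases with
        | last => rw [hlast, hval] at hik; exact absurd hik (hβ l)
        | cast r => rw [hval, hval] at hik; exact congrArg Fin.castSucc (hβinj hik)
    have key : ∀ x ∈ s, ∑ i, a' i * Real.exp (β' i * x) = 0 := by
      intro x hx
      rw [Fin.sum_univ_castSucc]
      simp only [ha', hβ', Fin.snoc_castSucc, Fin.snoc_last, zero_mul, Real.exp_zero, mul_one]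
      rw [← hf x, (hsS hx).2]
      ring
    have := exp_sum_zeros (m + 1) a' β' ha'0 hβ'inj s key
    omega
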